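/- Identify ℝ^{n+3} = ℝ × ℝ^{n+1} × ℝ and write vectors as (a, w, b). (a) For every contact element (p, ξ), the vectors k₁ = (1, p, 0) and k₂ = (0, ξ, 1) are lightlike, linearly independent, and satisfy ⟨k₁, k₂⟩ = 0, so they span a line on the Lie quadric. (b) Conversely, for every pair x, y of nonzero, linearly independent lightlike vectors with ⟨x, y⟩ = 0, there exists a unique contact element (p, ξ) such that span{x, y} = span{(1, p, 0), (0, ξ, 1)}. Thus the map (p, ξ) ↦ [(1,p,0), (0,ξ,1)] is a bijection from T₁S^n onto the set of projective lines lying on the Lie quadric. -/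

import Mathlib

open scoped RealInnerProductSpace

/-- The bilinear form of signature `(n+1,2)` on `ℝ^{n+3} = ℝ × ℝ^{n+1} × ℝ`,
writing vectors as `(a, w, b)`:  `⟨(a,w,b),(a',w',b')⟩ = -aa' + w·w' - bb'`. -/
noncomputable def lieFormP (n : ℕ) (x y : ℝ × EuclideanSpace ℝ (Fin (n + 1)) × ℝ) : ℝ :=
  -(x.1 * y.1) + ⟪x.2.1, y.2.1⟫ - x.2.2 * y.2.2

section Aux

variable {n : ℕ}

private lemma lieFormP_comb (x y : ℝ × EuclideanSpace ℝ (Fin (n + 1)) × ℝ) (s t s' t' : ℝ) :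
    lieFormP n (s • x + t • y) (s' • x + t' • y) =
      s * s' * lieFormP n x x + (s * t' + t * s') * lieFormP n x y +
        t * t' * lieFormP n y y := by
  simp only [lieFormP, Prod.fst_add, Prod.smul_fst, Prod.snd_add, Prod.smul_snd, smul_eq_mul,
    inner_add_left, inner_add_right, real_inner_smul_left, real_inner_smul_right]
  rw [real_inner_comm y.2.1 x.2.1]
  ring

private lemma null_zero (z : ℝ × EuclideanSpace ℝ (Fin (n + 1)) × ℝ)
    (hz : lieFormP n z z = 0) (h1 : z.1 = 0) (h2 : z.2.2 = 0) : z = 0 := by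
  have hin : ⟪z.2.1, z.2.1⟫ = 0 := by
    simp only [lieFormP, h1, h2] at hz
    linarith
  have h21 : z.2.1 = 0 := inner_self_eq_zero.mp hin
  obtain ⟨a, w, b⟩ := z
  simp only at h1 h21 h2
  simp [Prod.ext_iff, h1, h21, h2]

private lemma norm_one_of_sq (p : EuclideanSpace ℝ (Fin (n + 1))) (h : ⟪p, p⟫ = 1) :
    ‖p‖ = 1 := by
  have h2 : ‖p‖ ^ 2 = 1 := by rw [← real_inner_self_eq_norm_sq]; exact h
  have h0 : 0 ≤ ‖p‖ := norm_nonneg p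
  nlinarith [sq_nonneg (‖p‖ - 1), sq_nonneg (‖p‖ + 1)]

private lemma span_pair_eq {M : Type*} [AddCommGroup M] [Module ℝ M]
    (x y u v : M) (s t s' t' : ℝ) (hu : u = s • x + t • y) (hv : v = s' • x + t' • y)
    (hdet : s * t' - t * s' ≠ 0) :
    Submodule.span ℝ {x, y} = Submodule.span ℝ {u, v} := by
  apply le_antisymm
  · rw [Submodule.span_le]
    rintro z hz
    rw [SetLike.mem_coe, Submodule.mem_span_pair]
    rcases hz with rfl | rfl
    · refine ⟨t' / (s * t' - t * s'), -t / (s * t' - t * s'), ?_⟩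
      subst hu hv
      match_scalars <;> (field_simp [show t' * s - t * s' ≠ 0 by rwa [mul_comm t' s]]; ring)
    · refine ⟨-s' / (s * t' - t * s'), s / (s * t' - t * s'), ?_⟩
      subst hu hv
      have h2 : -(s' * t) + s * t' ≠ 0 := by rwa [neg_add_eq_sub, mul_comm s' t]
      match_scalars <;> field_simp <;> ring_nf <;> rw [← neg_mul, ← add_mul, mul_inv_cancel₀ h2]
  · rw [Submodule.span_le]
    rintro z hz
    rw [SetLike.mem_coe, Submodule.mem_span_pair]
    rcases hz with rfl | rfl
    · exact ⟨s, t, hu.symm⟩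
    · exact ⟨s', t', hv.symm⟩

end Aux

/-- (a) For every contact element `(p, ξ)` of `Sⁿ`, the vectors `k₁ = (1,p,0)` and
`k₂ = (0,ξ,1)` are lightlike, linearly independent, and satisfy `⟨k₁,k₂⟩ = 0`, so they
span a line on the Lie quadric.
(b) Conversely, for every pair `x, y` of nonzero, linearly independent lightlike vectors
with `⟨x,y⟩ = 0`, there is a unique contact element `(p, ξ)` with
`span{x,y} = span{(1,p,0), (0,ξ,1)}`.  Thus `(p,ξ) ↦ [(1,p,0),(0,ξ,1)]` is a bijection
from `T₁Sⁿ` onto the set of projective lines lying on the Lie quadric. -/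
theorem contact_elements_correspond_to_lines (n : ℕ) :
    (∀ p ξ : EuclideanSpace ℝ (Fin (n + 1)), ‖p‖ = 1 → ‖ξ‖ = 1 → ⟪p, ξ⟫ = 0 →
      lieFormP n ((1 : ℝ), p, (0 : ℝ)) ((1 : ℝ), p, (0 : ℝ)) = 0 ∧
      lieFormP n ((0 : ℝ), ξ, (1 : ℝ)) ((0 : ℝ), ξ, (1 : ℝ)) = 0 ∧
      lieFormP n ((1 : ℝ), p, (0 : ℝ)) ((0 : ℝ), ξ, (1 : ℝ)) = 0 ∧
      LinearIndependent ℝ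
        ![(((1 : ℝ), p, (0 : ℝ)) : ℝ × EuclideanSpace ℝ (Fin (n + 1)) × ℝ),
          ((0 : ℝ), ξ, (1 : ℝ))]) ∧
    (∀ x y : ℝ × EuclideanSpace ℝ (Fin (n + 1)) × ℝ, x ≠ 0 → y ≠ 0 →
      LinearIndependent ℝ ![x, y] →
      lieFormP n x x = 0 → lieFormP n y y = 0 → lieFormP n x y = 0 →
      ∃! pξ : EuclideanSpace ℝ (Fin (n + 1)) × EuclideanSpace ℝ (Fin (n + 1)),
        (‖pξ.1‖ = 1 ∧ ‖pξ.2‖ = 1 ∧ ⟪pξ.1, pξ.2⟫ = 0) ∧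
        Submodule.span ℝ {x, y} =
          Submodule.span ℝ
            {(((1 : ℝ), pξ.1, (0 : ℝ)) : ℝ × EuclideanSpace ℝ (Fin (n + 1)) × ℝ),
             ((0 : ℝ), pξ.2, (1 : ℝ))}) := by
  constructor
  · -- Part (a)
    intro p ξ hp hξ hpξ
    refine ⟨?_, ?_, ?_, ?_⟩
    · simp only [lieFormP]
      rw [real_inner_self_eq_norm_sq, hp]
      norm_num
    · simp only [lieFormP]
      rw [real_inner_self_eq_norm_sq, hξ]
      norm_num
    · simp [lieFormP, hpξ]
    · rw [LinearIndependent.pair_iff]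
      intro s t h
      have h1 := congrArg Prod.fst h
      have h2 := congrArg (fun v => v.2.2) h
      simp only [Prod.fst_add, Prod.smul_fst, Prod.snd_add, Prod.smul_snd, smul_eq_mul,
        Prod.fst_zero, Prod.snd_zero, mul_one, mul_zero, add_zero, zero_add] at h1 h2
      exact ⟨h1, h2⟩
  · -- Part (b)
    intro x y hx hy hind hxx hyy hxy
    have hpair := LinearIndependent.pair_iff.mp hind
    set a := x.1 with ha
    set b := x.2.2 with hb
    set c := y.1 with hc
    set d := y.2.2 with hd
    -- every element of the span is lightlike
    have hnull : ∀ s t : ℝ, lieFormP n (s • x + t • y) (s • x + t • y) = 0 := by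
      intro s t
      rw [lieFormP_comb, hxx, hyy, hxy]; ring
    have key : ∀ s t : ℝ, s * a + t * c = 0 → s * b + t * d = 0 → s = 0 ∧ t = 0 := by
      intro s t h1 h2
      apply hpair
      apply null_zero (s • x + t • y) (hnull s t)
      · simpa using h1
      · simpa using h2
    have hD : a * d - b * c ≠ 0 := by
      intro hD0
      have k1 := key d (-b) (by linear_combination hD0) (by ring)
      have k2 := key c (-a) (by ring) (by linear_combination -hD0)
      have ha0 : a = 0 := by linarith [k2.2]
      have hb0 : b = 0 := by linarith [k1.2]
      exact hx (null_zero x hxx ha0 hb0)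
    set D := a * d - b * c with hDdef
    set u₁ : ℝ × EuclideanSpace ℝ (Fin (n + 1)) × ℝ := (d / D) • x + (-b / D) • y with hu₁
    set u₂ : ℝ × EuclideanSpace ℝ (Fin (n + 1)) × ℝ := (-c / D) • x + (a / D) • y with hu₂
    have hu₁1 : u₁.1 = 1 := by
      simp only [hu₁, Prod.fst_add, Prod.smul_fst, smul_eq_mul, ← ha, ← hc]
      field_simp
      ring
    have hu₁3 : u₁.2.2 = 0 := by
      simp only [hu₁, Prod.snd_add, Prod.smul_snd, smul_eq_mul, ← hb, ← hd]
      field_simp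
      ring
    have hu₂1 : u₂.1 = 0 := by
      simp only [hu₂, Prod.fst_add, Prod.smul_fst, smul_eq_mul, ← ha, ← hc]
      field_simp
      ring
    have hu₂3 : u₂.2.2 = 1 := by
      simp only [hu₂, Prod.snd_add, Prod.smul_snd, smul_eq_mul, ← hb, ← hd]
      field_simp
      ring
    set p := u₁.2.1 with hpdef
    set ξ := u₂.2.1 with hξdef
    have hu₁eq : u₁ = ((1 : ℝ), p, (0 : ℝ)) := by
      refine Prod.ext hu₁1 (Prod.ext rfl hu₁3)
    have hu₂eq : u₂ = ((0 : ℝ), ξ, (1 : ℝ)) := by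
      refine Prod.ext hu₂1 (Prod.ext rfl hu₂3)
    -- the form values on u₁, u₂
    have hf11 : lieFormP n u₁ u₁ = 0 := by rw [hu₁]; exact hnull _ _
    have hf22 : lieFormP n u₂ u₂ = 0 := by rw [hu₂]; exact hnull _ _
    have hf12 : lieFormP n u₁ u₂ = 0 := by
      rw [hu₁, hu₂, lieFormP_comb, hxx, hyy, hxy]; ring
    have hpnorm : ‖p‖ = 1 := by
      apply norm_one_of_sq
      rw [hu₁eq] at hf11
      simp only [lieFormP] at hf11
      linarith
    have hξnorm : ‖ξ‖ = 1 := by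
      apply norm_one_of_sq
      rw [hu₂eq] at hf22
      simp only [lieFormP] at hf22
      linarith
    have hpξ : ⟪p, ξ⟫ = 0 := by
      rw [hu₁eq, hu₂eq] at hf12
      simp only [lieFormP] at hf12
      linarith
    have hspan : Submodule.span ℝ ({x, y} : Set (ℝ × EuclideanSpace ℝ (Fin (n + 1)) × ℝ)) =
        Submodule.span ℝ {((1 : ℝ), p, (0 : ℝ)), ((0 : ℝ), ξ, (1 : ℝ))} := by
      rw [← hu₁eq, ← hu₂eq]
      apply span_pair_eq x y u₁ u₂ (d / D) (-b / D) (-c / D) (a / D) hu₁ hu₂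
      have hone : d / D * (a / D) - -b / D * (-c / D) = 1 / D := by
        rw [div_mul_div_comm, neg_div, neg_div, neg_mul_neg, div_mul_div_comm]
        rw [div_sub_div _ _ (mul_ne_zero hD hD) (mul_ne_zero hD hD)]
        rw [div_eq_div_iff (mul_ne_zero (mul_ne_zero hD hD) (mul_ne_zero hD hD)) hD, hDdef]
        ring
      rw [hone]
      exact one_div_ne_zero hD
    -- uniqueness helper: elements of the span with zero first and last coords vanish
    have hmem_null : ∀ z ∈ Submodule.span ℝ ({x, y} :
        Set (ℝ × EuclideanSpace ℝ (Fin (n + 1)) × ℝ)), lieFormP n z z = 0 := by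
      intro z hz
      rcases Submodule.mem_span_pair.mp hz with ⟨s, t, rfl⟩
      exact hnull s t
    refine ⟨(p, ξ), ⟨⟨hpnorm, hξnorm, hpξ⟩, hspan⟩, ?_⟩
    rintro ⟨p', ξ'⟩ ⟨⟨hp', hξ', hpξ'⟩, hspan'⟩
    have hmem1 : (((1 : ℝ), p', (0 : ℝ)) : ℝ × EuclideanSpace ℝ (Fin (n + 1)) × ℝ) ∈
        Submodule.span ℝ ({x, y} : Set _) := by
      rw [hspan']
      exact Submodule.subset_span (Set.mem_insert _ _)
    have hmem2 : (((0 : ℝ), ξ', (1 : ℝ)) : ℝ × EuclideanSpace ℝ (Fin (n + 1)) × ℝ) ∈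
        Submodule.span ℝ ({x, y} : Set _) := by
      rw [hspan']
      exact Submodule.subset_span (Set.mem_insert_of_mem _ rfl)
    have hmem1' : (((1 : ℝ), p, (0 : ℝ)) : ℝ × EuclideanSpace ℝ (Fin (n + 1)) × ℝ) ∈
        Submodule.span ℝ ({x, y} : Set _) := by
      rw [hspan]
      exact Submodule.subset_span (Set.mem_insert _ _)
    have hmem2' : (((0 : ℝ), ξ, (1 : ℝ)) : ℝ × EuclideanSpace ℝ (Fin (n + 1)) × ℝ) ∈
        Submodule.span ℝ ({x, y} : Set _) := by
      rw [hspan]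
      exact Submodule.subset_span (Set.mem_insert_of_mem _ rfl)
    have hdiff1 : (((1 : ℝ), p', (0 : ℝ)) : ℝ × EuclideanSpace ℝ (Fin (n + 1)) × ℝ) -
        ((1 : ℝ), p, (0 : ℝ)) = 0 := by
      apply null_zero _ (hmem_null _ (Submodule.sub_mem _ hmem1 hmem1')) <;> simp
    have hdiff2 : (((0 : ℝ), ξ', (1 : ℝ)) : ℝ × EuclideanSpace ℝ (Fin (n + 1)) × ℝ) -
        ((0 : ℝ), ξ, (1 : ℝ)) = 0 := by
      apply null_zero _ (hmem_null _ (Submodule.sub_mem _ hmem2 hmem2')) <;> simp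
    have hp'' : p' = p := by
      have := sub_eq_zero.mp hdiff1
      exact congrArg (fun v => v.2.1) this
    have hξ'' : ξ' = ξ := by
      have := sub_eq_zero.mp hdiff2
      exact congrArg (fun v => v.2.1) this
    simp [hp'', hξ'']
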